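/- Let $\mathcal{A}$ be an $n\times n$ matrix function on $\Omega$ of the block form $\mathcal{A} = \begin{pmatrix}\mathcal{A}_1 & \mathcal{A}_2\tfrac{t}{|t|}\\ \tfrac{t^T}{|t|}\mathcal{A}_3 & b\,I\end{pmatrix}$. Then the operator $L = -\mathrm{div}(|t|^{d+1-n}\mathcal{A}\nabla)$ satisfies, in the sense of distributions on $\Omega$, $L = -|t|^{d+1-n}\big[\mathrm{div}_x(\mathcal{A}_1\nabla_x) + \mathrm{div}_x(\mathcal{A}_2\partial_r) + \partial_r(\mathcal{A}_3\nabla_x) + \partial_r(b\,\partial_r) + \tfrac12\sum_{i,j=d+1}^n \partial_{\varphi_{ij}}(b\,\partial_{\varphi_{ij}})\big]$. -/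
import Mathlib


open MeasureTheory
open scoped BigOperators

noncomputable section

/-- Partial derivative in the `x`-coordinate `i`. -/
def pdX {d m : ℕ}
    (u : EuclideanSpace ℝ (Fin d) × EuclideanSpace ℝ (Fin m) → ℝ) (i : Fin d)
    (p : EuclideanSpace ℝ (Fin d) × EuclideanSpace ℝ (Fin m)) : ℝ :=
  fderiv ℝ u p (EuclideanSpace.single i 1, 0)

/-- Partial derivative in the `t`-coordinate `α`. -/
def pdT {d m : ℕ}
    (u : EuclideanSpace ℝ (Fin d) × EuclideanSpace ℝ (Fin m) → ℝ) (α : Fin m)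
    (p : EuclideanSpace ℝ (Fin d) × EuclideanSpace ℝ (Fin m)) : ℝ :=
  fderiv ℝ u p (0, EuclideanSpace.single α 1)

/-- The radial derivative `∂_r u = ∑_α (t_α/|t|) ∂_α u`. -/
def radD {d m : ℕ}
    (u : EuclideanSpace ℝ (Fin d) × EuclideanSpace ℝ (Fin m) → ℝ)
    (p : EuclideanSpace ℝ (Fin d) × EuclideanSpace ℝ (Fin m)) : ℝ :=
  ∑ α, (p.2 α / ‖p.2‖) * pdT u α p

/-- The angular derivative `∂_{φ_{ij}} u = -(t_i/|t|) ∂_j u + (t_j/|t|) ∂_i u`. -/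
def angD {d m : ℕ} (i j : Fin m)
    (u : EuclideanSpace ℝ (Fin d) × EuclideanSpace ℝ (Fin m) → ℝ)
    (p : EuclideanSpace ℝ (Fin d) × EuclideanSpace ℝ (Fin m)) : ℝ :=
  -(p.2 i / ‖p.2‖) * pdT u j p + (p.2 j / ‖p.2‖) * pdT u i p

lemma angle_split' {m : ℕ} (c U V : Fin m → ℝ) (hc : ∑ α, c α ^ 2 = 1) :
    ∑ α, U α * V α
      = (∑ α, c α * U α) * (∑ α, c α * V α)
        + (1 / 2) * ∑ i, ∑ j,
            (-(c i) * U j + c j * U i) * (-(c i) * V j + c j * V i) := by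
  have E2 : ∑ i, ∑ j, (-(c i) * U j + c j * U i) * (-(c i) * V j + c j * V i)
      + (∑ i, c i * V i) * (∑ j, c j * U j) + (∑ i, c i * U i) * (∑ j, c j * V j)
      = (∑ i, c i ^ 2) * (∑ j, U j * V j) + (∑ i, U i * V i) * (∑ j, c j ^ 2) := by
    simp only [Finset.sum_mul_sum, ← Finset.sum_add_distrib]
    refine Finset.sum_congr rfl fun i _ => Finset.sum_congr rfl fun j _ => by ring
  rw [hc] at E2
  nlinarith [E2]

/-- The operator `L = -div(|t|^{d+1-n} 𝒜 ∇)` with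
`𝒜 = [[𝒜₁, 𝒜₂ t/|t|], [tᵀ/|t| 𝒜₃, b I]]` rewritten in cylindrical derivatives: for all
`u, v ∈ C_0^∞(Ω)` the bilinear form `∬ 𝒜∇u·∇v |t|^{d+1-n}` equals the corresponding
bilinear form of
`-|t|^{d+1-n}[div_x(𝒜₁∇_x) + div_x(𝒜₂ ∂_r) + ∂_r(𝒜₃∇_x) + ∂_r(b ∂_r)
 + ½ ∑_{ij} ∂_{φ_{ij}}(b ∂_{φ_{ij}})]`. -/
theorem stmt_19 {d n : ℕ} (hd : 0 < d) (hdn : d < n)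
    (A1 : EuclideanSpace ℝ (Fin d) × EuclideanSpace ℝ (Fin (n - d)) →
      Fin d → Fin d → ℝ)
    (A2 A3 : EuclideanSpace ℝ (Fin d) × EuclideanSpace ℝ (Fin (n - d)) → Fin d → ℝ)
    (b : EuclideanSpace ℝ (Fin d) × EuclideanSpace ℝ (Fin (n - d)) → ℝ)
    (u v : EuclideanSpace ℝ (Fin d) × EuclideanSpace ℝ (Fin (n - d)) → ℝ)
    (hu : ContDiff ℝ (⊤ : ℕ∞) u) (hv : ContDiff ℝ (⊤ : ℕ∞) v)
    (huc : HasCompactSupport u) (hvc : HasCompactSupport v)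
    (huΩ : tsupport u ⊆
      {p : EuclideanSpace ℝ (Fin d) × EuclideanSpace ℝ (Fin (n - d)) | p.2 ≠ 0})
    (hvΩ : tsupport v ⊆
      {p : EuclideanSpace ℝ (Fin d) × EuclideanSpace ℝ (Fin (n - d)) | p.2 ≠ 0}) :
    (∫ p : EuclideanSpace ℝ (Fin d) × EuclideanSpace ℝ (Fin (n - d)),
        ((∑ i, ∑ k, A1 p i k * pdX u k p * pdX v i p)
          + (∑ i, ∑ α, A2 p i * (p.2 α / ‖p.2‖) * pdT u α p * pdX v i p)
          + (∑ α, ∑ k, (p.2 α / ‖p.2‖) * A3 p k * pdX u k p * pdT v α p)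
          + b p * ∑ α, pdT u α p * pdT v α p)
          * ‖p.2‖ ^ ((d : ℤ) + 1 - (n : ℤ)))
      = ∫ p : EuclideanSpace ℝ (Fin d) × EuclideanSpace ℝ (Fin (n - d)),
          ((∑ i, ∑ k, A1 p i k * pdX u k p * pdX v i p)
            + (∑ i, A2 p i * radD u p * pdX v i p)
            + (∑ k, A3 p k * pdX u k p) * radD v p
            + b p * (radD u p * radD v p)
            + (1 / 2) * ∑ i, ∑ j, b p * angD i j u p * angD i j v p)
            * ‖p.2‖ ^ ((d : ℤ) + 1 - (n : ℤ)) := by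
  congr 1
  funext p
  by_cases hp : p.2 = 0
  · have hdu : fderiv ℝ u p = 0 := by
      have hpu : p ∉ tsupport u := fun h => (huΩ h) hp
      have heq : u =ᶠ[nhds p] 0 := notMem_tsupport_iff_eventuallyEq.mp hpu
      rw [heq.fderiv_eq]
      exact fderiv_const_apply 0
    simp [pdX, pdT, radD, angD, hdu]
  · have hr : ‖p.2‖ ≠ 0 := norm_ne_zero_iff.mpr hp
    congr 1
    have hc : ∑ α, (p.2 α / ‖p.2‖) ^ 2 = 1 := by
      have hn2 : ‖p.2‖ ^ 2 = ∑ α, p.2 α ^ 2 := by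
        rw [EuclideanSpace.norm_eq, Real.sq_sqrt (by positivity)]
        simp [Real.norm_eq_abs, sq_abs]
      simp_rw [div_pow]
      rw [← Finset.sum_div, ← hn2, div_self (by positivity)]
    have key := angle_split' (fun α => p.2 α / ‖p.2‖) (fun α => pdT u α p)
      (fun α => pdT v α p) hc
    have h2 : (∑ i, ∑ α, A2 p i * (p.2 α / ‖p.2‖) * pdT u α p * pdX v i p)
        = ∑ i, A2 p i * radD u p * pdX v i p := by
      refine Finset.sum_congr rfl fun i _ => ?_
      rw [radD, mul_comm (A2 p i) (∑ α, (p.2 α / ‖p.2‖) * pdT u α p), Finset.sum_mul,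
        Finset.sum_mul]
      exact Finset.sum_congr rfl fun α _ => by ring
    have h3 : (∑ α, ∑ k, (p.2 α / ‖p.2‖) * A3 p k * pdX u k p * pdT v α p)
        = (∑ k, A3 p k * pdX u k p) * radD v p := by
      rw [radD, Finset.mul_sum]
      refine Finset.sum_congr rfl fun α _ => ?_
      rw [Finset.sum_mul]
      exact Finset.sum_congr rfl fun k _ => by ring
    have h4 : b p * ∑ α, pdT u α p * pdT v α p
        = b p * (radD u p * radD v p)
          + (1 / 2) * ∑ i, ∑ j, b p * angD i j u p * angD i j v p := by
      have hb : ∑ i, ∑ j, b p * angD i j u p * angD i j v p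
          = b p * ∑ i, ∑ j, angD i j u p * angD i j v p := by
        rw [Finset.mul_sum]
        refine Finset.sum_congr rfl fun i _ => ?_
        rw [Finset.mul_sum]
        exact Finset.sum_congr rfl fun j _ => by ring
      rw [hb, radD, radD]
      simp only [angD]
      rw [key]
      ring
    rw [h2, h3, h4]
    ring

end
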